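/- Let C be a composition algebra and x, y ∈ C with N(x) = N(y) = 1 (so y is invertible with y⁻¹ the unique two-sided inverse). Then (xy⁻¹)² − ⟨x,y⟩·(xy⁻¹) + 1 = 0, and moreover (xy⁻¹)² = −1 if and only if ⟨x,y⟩ = 0. -/
import Mathlib


/-- The bilinear (polar) form associated to a quadratic form `N`. -/
def polarForm {k C : Type*} [Field k] [AddCommGroup C] (N : C → k) (x y : C) : k :=
  N (x + y) - N x - N y

/-- For norm-one `x, y` in a composition algebra, with `y⁻¹ = ⟨y,1⟩·1 − y`,
one has `(xy⁻¹)² − ⟨x,y⟩·(xy⁻¹) + 1 = 0`, and `(xy⁻¹)² = −1 ↔ x ⊥ y`. -/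
theorem norm_one_min_eq (k C : Type*) [Field k] [NonAssocRing C] [Module k C]
    [SMulCommClass k C C] [IsScalarTower k C C] [FiniteDimensional k C]
    (N : C → k)
    (hN_smul : ∀ (a : k) (x : C), N (a • x) = a ^ 2 * N x)
    (hpolar_add : ∀ x y z : C, polarForm N (x + y) z = polarForm N x z + polarForm N y z)
    (hpolar_smul : ∀ (a : k) (x y : C), polarForm N (a • x) y = a * polarForm N x y)
    (hN_nondeg : ∀ x : C, (∀ y : C, polarForm N x y = 0) → x = 0)
    (hN_mul : ∀ x y : C, N (x * y) = N x * N y)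
    (x y : C) (hx : N x = 1) (hy : N y = 1) :
    (x * (polarForm N y 1 • (1 : C) - y)) * (x * (polarForm N y 1 • (1 : C) - y))
        - polarForm N x y • (x * (polarForm N y 1 • (1 : C) - y)) + 1 = 0 ∧
    ((x * (polarForm N y 1 • (1 : C) - y)) * (x * (polarForm N y 1 • (1 : C) - y)) = -1
        ↔ polarForm N x y = 0) := by
  have Bsymm : ∀ a b : C, polarForm N a b = polarForm N b a := by
    intro a b; simp only [polarForm, add_comm]; ring
  have Badd' : ∀ a b c : C, polarForm N a (b + c) = polarForm N a b + polarForm N a c := by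
    intro a b c; rw [Bsymm, hpolar_add, Bsymm b, Bsymm c]
  have Bneg : ∀ a b : C, polarForm N (-a) b = - polarForm N a b := by
    intro a b
    have h := hpolar_smul (-1) a b
    simpa using h
  have Nzero : N (0 : C) = 0 := by
    have h := hN_smul 0 0
    simpa using h
  have hN1 : N (1 : C) = 1 := by
    have h := hN_mul x 1
    rw [mul_one, hx] at h
    simpa using h.symm
  have key1 : ∀ a b c : C, polarForm N (a * c) (b * c) = polarForm N a b * N c := by
    intro a b c
    simp only [polarForm]
    rw [← add_mul, hN_mul, hN_mul, hN_mul]; ring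
  have key2 : ∀ a b c : C, polarForm N (a * b) (a * c) = N a * polarForm N b c := by
    intro a b c
    simp only [polarForm]
    rw [← mul_add, hN_mul, hN_mul, hN_mul]; ring
  have key4 : ∀ a b c d : C, polarForm N (a * b) (c * d) + polarForm N (a * d) (c * b)
      = polarForm N a c * polarForm N b d := by
    intro a b c d
    have h := key1 a c (b + d)
    rw [mul_add, mul_add, hpolar_add, Badd', Badd'] at h
    have hb := key1 a c b
    have hd := key1 a c d
    have hNbd : N (b + d) = polarForm N b d + N b + N d := by
      simp only [polarForm]; ring
    rw [hNbd, hb, hd] at h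
    linear_combination h
  have Bsq : ∀ z u : C, polarForm N (z * z) u
      = polarForm N z 1 * polarForm N z u - N z * polarForm N u 1 := by
    intro z u
    have h4 := key4 z z 1 u
    rw [one_mul, one_mul] at h4
    have h2 := key2 z u 1
    rw [mul_one] at h2
    linear_combination h4 - h2
  have minEq : ∀ z : C, z * z - polarForm N z 1 • z + N z • (1 : C) = 0 := by
    intro z
    apply hN_nondeg
    intro u
    rw [sub_eq_add_neg, hpolar_add, hpolar_add, Bneg, hpolar_smul, hpolar_smul, Bsq,
      Bsymm 1 u]
    ring
  set yi : C := polarForm N y 1 • (1 : C) - y with hyi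
  have hmulyi : ∀ a : C, a * yi = polarForm N y 1 • a - a * y := by
    intro a
    rw [hyi, mul_sub, mul_smul_comm, mul_one]
  have hyyi : y * yi = N y • (1 : C) := by
    have h := minEq y
    rw [hmulyi]
    linear_combination (norm := module) -h
  have hNyi : N yi = 1 := by
    have h := hN_mul y yi
    rw [hyyi, hy, one_smul, hN1] at h
    simpa using h.symm
  set z : C := x * yi with hz
  have hNz : N z = 1 := by rw [hz, hN_mul, hx, hNyi, one_mul]
  have hBz1 : polarForm N z 1 = polarForm N x y := by
    have h4 := key4 x y 1 1
    rw [mul_one, one_mul, mul_one] at h4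
    have : z = polarForm N y 1 • x - x * y := by rw [hz, hmulyi]
    rw [this, sub_eq_add_neg, hpolar_add, Bneg, hpolar_smul]
    linear_combination -h4
  have hmain : z * z - polarForm N x y • z + 1 = 0 := by
    have h := minEq z
    rw [hBz1, hNz, one_smul] at h
    exact h
  refine ⟨hmain, ?_, ?_⟩
  · intro hsq
    rw [hsq] at hmain
    have hz0 : polarForm N x y • z = 0 := by linear_combination (norm := module) -hmain
    by_contra hne
    have : z = 0 := by
      have := congrArg (fun w => (polarForm N x y)⁻¹ • w) hz0
      simpa [smul_smul, inv_mul_cancel₀ hne] using this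
    rw [this] at hNz
    rw [Nzero] at hNz
    exact one_ne_zero hNz.symm
  · intro h
    rw [h, zero_smul, sub_zero] at hmain
    exact eq_neg_of_add_eq_zero_left hmain
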